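/- For any primitive Dirichlet character ψ modulo m and any absolutely summable sequence of complex numbers (a_n) indexed by the integers, there exists θ ∈ [0,1] such that |∑_{n∈ℤ} a_n ψ(n) e(nθ)| ≥ (√m / φ(m)) · |∑_{(n,m)=1} a_n|, where e(x) = e^{2πix}. -/

import Mathlib

open Complex

/-- `e(x) = e^{2πix}` -/
noncomputable def e (x : ℝ) : ℂ := Complex.exp (2 * Real.pi * Complex.I * x)

section aux
open DirichletCharacter ZMod AddChar Finset

variable {m : ℕ} [NeZero m]
set_option linter.unusedSectionVars false

lemma norm_e (x : ℝ) : ‖e x‖ = 1 := by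
  have : (2 * Real.pi * Complex.I * x) = ((2 * Real.pi * x : ℝ) : ℂ) * Complex.I := by
    push_cast; ring
  rw [e, this, Complex.norm_exp_ofReal_mul_I]

lemma e_eq_stdAddChar (n : ℤ) (v : ZMod m) :
    e ((n : ℝ) * ((v.val : ℝ) / m)) = ZMod.stdAddChar ((n : ZMod m) * v) := by
  have h : ((n : ZMod m) * v) = (((n * v.val : ℤ) : ZMod m)) := by
    push_cast [ZMod.natCast_val, ZMod.cast_id]
    norm_cast
  rw [h, ZMod.stdAddChar_coe, e]
  congr 1
  push_cast
  have hm : (m : ℂ) ≠ 0 := Nat.cast_ne_zero.mpr (NeZero.ne m)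
  field_simp

lemma isUnit_intCast_iff (n : ℤ) : IsUnit ((n : ℤ) : ZMod m) ↔ Int.gcd n m = 1 := by
  have h : Int.gcd n m = n.natAbs.gcd m := by simp [Int.gcd]
  rw [h, ← Nat.coprime_iff_gcd_eq_one, ← ZMod.isUnit_iff_coprime]
  rcases Int.natAbs_eq n with h' | h' <;> nth_rewrite 1 [h']
  · rw [Int.cast_natCast]
  · rw [Int.cast_neg, Int.cast_natCast, IsUnit.neg_iff]

lemma inv_isPrimitive {ψ : DirichletCharacter ℂ m} (h : ψ.IsPrimitive) :
    (ψ⁻¹).IsPrimitive := by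
  have hker : ψ.toUnitHom.ker = (ψ⁻¹).toUnitHom.ker := by
    ext u
    simp only [MonoidHom.mem_ker, ← Units.val_inj, MulChar.coe_toUnitHom, Units.val_one]
    rw [MulChar.inv_apply_eq_inv', inv_eq_one]
  have key : ∀ d, ψ⁻¹.FactorsThrough d ↔ ψ.FactorsThrough d := by
    intro d
    constructor <;> intro hf <;>
      rw [factorsThrough_iff_ker_unitsMap hf.dvd] at *
    · rwa [hker]
    · rwa [← hker]
  rw [DirichletCharacter.isPrimitive_def] at h ⊢
  have : ψ⁻¹.conductorSet = ψ.conductorSet := Set.ext fun d => key d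
  rw [DirichletCharacter.conductor, this, ← DirichletCharacter.conductor, h]

lemma conj_stdAddChar (b : ZMod m) :
    (starRingEnd ℂ) (ZMod.stdAddChar b) = ZMod.stdAddChar (-b) := by
  have h1 : Complex.normSq (ZMod.stdAddChar b) = 1 := by
    rw [ZMod.stdAddChar_apply]; exact Circle.normSq_coe _
  have h2 : ZMod.stdAddChar (-b) * ZMod.stdAddChar b = 1 := by
    rw [← AddChar.map_add_eq_mul, neg_add_cancel, AddChar.map_zero_eq_one]
  have h3 : (starRingEnd ℂ) (ZMod.stdAddChar b) * ZMod.stdAddChar b = 1 := by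
    rw [mul_comm, Complex.mul_conj, h1, ofReal_one]
  have hne : (ZMod.stdAddChar b : ℂ) ≠ 0 := by
    intro h; rw [h, mul_zero] at h3; exact one_ne_zero h3.symm
  exact mul_right_cancel₀ hne (h3.trans h2.symm)

open scoped ZMod in
lemma norm_gaussSum_eq {ψ : DirichletCharacter ℂ m} (h : ψ.IsPrimitive)
    (hinv : (ψ⁻¹).IsPrimitive) :
    ‖gaussSum ψ ZMod.stdAddChar‖ = Real.sqrt m := by
  set τ := gaussSum ψ ZMod.stdAddChar with hτ
  set τ' := gaussSum ψ⁻¹ ZMod.stdAddChar with hτ'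
  have h1 : (ψ (-1) : ℂ) * τ' * τ = (m : ℂ) := by
    have hd := congrFun (ZMod.dft_dft (ψ : ZMod m → ℂ)) (-1)
    rw [show 𝓕 (ψ : ZMod m → ℂ) = fun k => ψ⁻¹ (-k) * τ from
      funext h.fourierTransform_eq_inv_mul_gaussSum] at hd
    rw [show (fun k => (ψ⁻¹ (-k) : ℂ) * τ) = fun k => (fun j => (ψ⁻¹ (-j) : ℂ)) k * τ from rfl,
      ZMod.dft_mul_const (fun j => (ψ⁻¹ (-j) : ℂ)) τ] at hd
    rw [show (fun j => (ψ⁻¹ (-j) : ℂ)) = fun j => (⇑(ψ⁻¹) : ZMod m → ℂ) (-j) from rfl,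
      ZMod.dft_comp_neg (⇑(ψ⁻¹) : ZMod m → ℂ)] at hd
    simp only [neg_neg] at hd
    rw [hinv.fourierTransform_eq_inv_mul_gaussSum 1] at hd
    simp only [inv_inv, smul_eq_mul, neg_neg, map_one, mul_one] at hd
    rw [← hd]
  have hG : (starRingEnd ℂ) τ = gaussSum ψ⁻¹ (ZMod.stdAddChar.mulShift (-1)) := by
    rw [hτ, gaussSum, map_sum, gaussSum]
    congr 1
    ext b
    rw [map_mul, conj_stdAddChar, starRingEnd_apply, MulChar.star_apply' ψ b,
      AddChar.mulShift_apply, neg_one_mul]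
  have h2 : ‖τ'‖ = ‖τ‖ := by
    have hms := gaussSum_mulShift ψ⁻¹ ZMod.stdAddChar (-1 : (ZMod m)ˣ)
    simp only [Units.val_neg, Units.val_one] at hms
    rw [← hG] at hms
    have h5 := congrArg norm hms
    rw [norm_mul, RCLike.norm_conj] at h5
    have hu : ‖(ψ⁻¹ (-1) : ℂ)‖ = 1 := by
      simpa using unit_norm_eq_one ψ⁻¹ (-1 : (ZMod m)ˣ)
    rw [hu, one_mul] at h5
    exact h5.symm
  have h3 : ‖τ‖ ^ 2 = (m : ℝ) := by
    have := congrArg norm h1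
    rw [norm_mul, norm_mul] at this
    have hu : ‖(ψ (-1) : ℂ)‖ = 1 := by simpa using unit_norm_eq_one ψ (-1 : (ZMod m)ˣ)
    rw [hu, one_mul, h2, Complex.norm_natCast] at this
    rw [← this]; ring
  rw [← h3, Real.sqrt_sq (norm_nonneg _)]

/-- The units of a monoid are equivalent to the subtype of elements that are units. -/
noncomputable def unitsEquivIsUnitSubtype (M : Type*) [Monoid M] :
    Mˣ ≃ {x : M // IsUnit x} where
  toFun u := ⟨u, u.isUnit⟩
  invFun x := x.2.unit
  left_inv u := Units.ext u.isUnit.unit_spec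
  right_inv x := Subtype.ext x.2.unit_spec

end aux

/-- For any primitive Dirichlet character `ψ` mod `m` and any absolutely summable
sequence `(aₙ)` of complex numbers indexed by `ℤ`, there is `θ ∈ [0,1]` with
`|∑ aₙ ψ(n) e(nθ)| ≥ (√m / φ(m)) |∑_{(n,m)=1} aₙ|`. -/
theorem stmt0 (m : ℕ) [NeZero m] (ψ : DirichletCharacter ℂ m) (hψ : ψ.IsPrimitive)
    (a : ℤ → ℂ) (ha : Summable fun n : ℤ => ‖a n‖) :
    ∃ θ ∈ Set.Icc (0 : ℝ) 1,
      (Real.sqrt m / Nat.totient m) *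
          ‖∑' n : ℤ, (if Int.gcd n m = 1 then a n else 0)‖ ≤
        ‖∑' n : ℤ, a n * ψ (n : ZMod m) * e (n * θ)‖ := by
  classical
  have hm0 : (0 : ℝ) < m := by exact_mod_cast Nat.pos_of_ne_zero (NeZero.ne m)
  set τ := gaussSum ψ ZMod.stdAddChar with hτ
  have hτnorm : ‖τ‖ = Real.sqrt m := norm_gaussSum_eq hψ (inv_isPrimitive hψ)
  set T : ℂ := ∑' n : ℤ, (if Int.gcd n m = 1 then a n else 0) with hT
  let θf : ZMod m → ℝ := fun v => (v.val : ℝ) / m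
  let F : ZMod m → ℂ := fun v => ∑' n : ℤ, a n * ψ (n : ZMod m) * e ((n : ℝ) * θf v)
  have hbound : ∀ (θ : ℝ) (n : ℤ), ‖a n * ψ (n : ZMod m) * e ((n : ℝ) * θ)‖ ≤ ‖a n‖ := by
    intro θ n
    rw [norm_mul, norm_mul, norm_e, mul_one]
    exact mul_le_of_le_one_right (norm_nonneg _) (ψ.norm_le_one _)
  have hsum : ∀ θ : ℝ, Summable (fun n : ℤ => a n * ψ (n : ZMod m) * e ((n : ℝ) * θ)) :=
    fun θ => Summable.of_norm_bounded ha (hbound θ)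
  obtain ⟨v₀, hv₀⟩ := Finite.exists_max (fun v : ZMod m => ‖F v‖)
  -- the key identity
  have key : ∑ v : ZMod m, ψ v * F v = T * τ := by
    have hsv : ∀ v : ZMod m,
        Summable (fun n : ℤ => ψ v * (a n * ψ (n : ZMod m) * e ((n : ℝ) * θf v))) :=
      fun v => (hsum (θf v)).mul_left _
    calc ∑ v : ZMod m, ψ v * F v
        = ∑ v : ZMod m, ∑' n : ℤ, ψ v * (a n * ψ (n : ZMod m) * e ((n : ℝ) * θf v)) := by
          exact Finset.sum_congr rfl fun v _ => (tsum_mul_left).symm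
      _ = ∑' n : ℤ, ∑ v : ZMod m, ψ v * (a n * ψ (n : ZMod m) * e ((n : ℝ) * θf v)) :=
          (Summable.tsum_finsetSum (fun v _ => hsv v)).symm
      _ = ∑' n : ℤ, (if Int.gcd n m = 1 then a n else 0) * τ := by
          refine tsum_congr fun n => ?_
          have e1 : ∀ v : ZMod m, ψ v * (a n * ψ (n : ZMod m) * e ((n : ℝ) * θf v))
              = (a n * ψ (n : ZMod m)) * (ψ v * ZMod.stdAddChar ((n : ZMod m) * v)) := by
            intro v
            rw [← e_eq_stdAddChar n v]
            ring
          rw [Finset.sum_congr rfl fun v _ => e1 v, ← Finset.mul_sum]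
          have e2 : ∑ v : ZMod m, ψ v * ZMod.stdAddChar ((n : ZMod m) * v)
              = ψ⁻¹ (n : ZMod m) * τ := by
            rw [← gaussSum_mulShift_of_isPrimitive ZMod.stdAddChar hψ (n : ZMod m), gaussSum]
            exact Finset.sum_congr rfl fun v _ => by rw [AddChar.mulShift_apply]
          rw [e2]
          by_cases hu : IsUnit ((n : ℤ) : ZMod m)
          · rw [if_pos ((isUnit_intCast_iff n).mp hu)]
            have : (ψ (n : ZMod m) : ℂ) * ψ⁻¹ (n : ZMod m) = 1 := by
              rw [← MulChar.mul_apply, mul_inv_cancel, MulChar.one_apply hu]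
            calc a n * ψ (n : ZMod m) * (ψ⁻¹ (n : ZMod m) * τ)
                = a n * ((ψ (n : ZMod m) : ℂ) * ψ⁻¹ (n : ZMod m)) * τ := by ring
              _ = a n * τ := by rw [this, mul_one]
          · rw [if_neg (fun hg => hu ((isUnit_intCast_iff n).mpr hg)), ψ.map_nonunit hu]
            ring
      _ = T * τ := by rw [hT, ← tsum_mul_right]
  -- estimates
  have hφpos : (0 : ℝ) < (Nat.totient m : ℝ) := by
    exact_mod_cast (Nat.totient_pos).mpr (Nat.pos_of_ne_zero (NeZero.ne m))
  have hS2 : ‖∑ v : ZMod m, ψ v * F v‖ ≤ (Nat.totient m : ℝ) * ‖F v₀‖ := by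
    calc ‖∑ v : ZMod m, ψ v * F v‖ ≤ ∑ v : ZMod m, ‖(ψ v : ℂ) * F v‖ := norm_sum_le _ _
      _ ≤ ∑ v : ZMod m, ‖(ψ v : ℂ)‖ * ‖F v₀‖ := by
          refine Finset.sum_le_sum fun v _ => ?_
          rw [norm_mul]
          exact mul_le_mul_of_nonneg_left (hv₀ v) (norm_nonneg _)
      _ = (∑ v : ZMod m, ‖(ψ v : ℂ)‖) * ‖F v₀‖ := by rw [Finset.sum_mul]
      _ = (Nat.totient m : ℝ) * ‖F v₀‖ := by
          congr 1
          calc ∑ v : ZMod m, ‖(ψ v : ℂ)‖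
              = ∑ v : ZMod m, (if IsUnit v then (1 : ℝ) else 0) := by
                refine Finset.sum_congr rfl fun v _ => ?_
                by_cases hv : IsUnit v
                · rw [if_pos hv]
                  simpa [hv.unit_spec] using DirichletCharacter.unit_norm_eq_one ψ hv.unit
                · rw [if_neg hv, ψ.map_nonunit hv, norm_zero]
            _ = ((Finset.univ.filter (fun v : ZMod m => IsUnit v)).card : ℝ) := by
                rw [Finset.sum_boole]
            _ = (Nat.totient m : ℝ) := by
                rw [← ZMod.card_units_eq_totient m]
                congr 1
                rw [← Fintype.card_subtype]
                exact (Fintype.card_congr (unitsEquivIsUnitSubtype (ZMod m))).symm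
  have hS1 : ‖∑ v : ZMod m, ψ v * F v‖ = ‖T‖ * Real.sqrt m := by
    rw [key, norm_mul, hτnorm]
  refine ⟨θf v₀, ⟨by positivity, ?_⟩, ?_⟩
  · rw [div_le_one hm0]
    exact_mod_cast (ZMod.val_lt v₀).le
  · show Real.sqrt m / (Nat.totient m : ℝ) * ‖T‖ ≤ ‖F v₀‖
    rw [div_mul_eq_mul_div, div_le_iff₀ hφpos, mul_comm (‖F v₀‖)]
    calc Real.sqrt m * ‖T‖ = ‖T‖ * Real.sqrt m := by ring
      _ = ‖∑ v : ZMod m, ψ v * F v‖ := hS1.symm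
      _ ≤ (Nat.totient m : ℝ) * ‖F v₀‖ := hS2
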